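/- (Key claim in the proof of Proposition 1(8)) For any machine i, any location x, any value v, and any configurations γ_1, γ_2, γ_3, γ_4: if γ_1 →^{LStore_i(x,v)} γ_2, γ_3 is reachable from γ_2 by a (possibly empty) finite sequence consisting solely of silent τ-steps (internal propagation steps), and γ_3 →^{RFlush_i(x)} γ_4, then γ_1 ⇒^{MStore_i(x,v)} γ_4, i.e., γ_4 is reachable from γ_1 by a transition sequence consisting of MStore_i(x,v) possibly interleaved with silent τ-steps. -/

import Mathlib

/-!  The CXL0 model.

We fix an abstract type `Machine` of machines, a type `Loc` of shared
locations, and a type `Val` of values with a distinguished value `z`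
(playing the role of the value `0`).  The partition of `Loc` into the
pairwise disjoint sets `Loc_1, …, Loc_N` is encoded by an ownership map
`owner : Loc → Machine` (so `x ∈ Loc_k` iff `owner x = k`).  Volatility of
each machine's memory is given by `vol : Machine → Bool` (`vol i = true`
means machine `i`'s memory is volatile).

A configuration `γ = (Cache, Mem)` is modeled by total maps
`cache : Machine → Loc → Option Val` (with `none` playing the role of `⊥`)
and `mem : Machine → Loc → Val` (the entries of `mem i` at locations not
owned by `i` are irrelevant; the transitions never consult them). -/

/-- Transition labels of the CXL0 labeled transition system. -/
inductive CXLLabel (Machine Loc Val : Type) : Type where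
  | LStore (i : Machine) (x : Loc) (v : Val)
  | RStore (i : Machine) (x : Loc) (v : Val)
  | MStore (i : Machine) (x : Loc) (v : Val)
  | Load   (i : Machine) (x : Loc) (v : Val)
  | LFlush (i : Machine) (x : Loc)
  | RFlush (i : Machine) (x : Loc)
  | GPF    (i : Machine)
  | Crash  (i : Machine)
  | tau

/-- Configurations of the CXL0 model. -/
structure CXLConfig (Machine Loc Val : Type) : Type where
  cache : Machine → Loc → Option Val
  mem   : Machine → Loc → Val

variable {Machine Loc Val : Type} [DecidableEq Machine] [DecidableEq Loc]

/-- Single labeled transition of the CXL0 model. -/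
inductive CXLStep (owner : Loc → Machine) (vol : Machine → Bool) (z : Val) :
    CXLConfig Machine Loc Val → CXLLabel Machine Loc Val →
      CXLConfig Machine Loc Val → Prop where
  | lstore (γ : CXLConfig Machine Loc Val) (i : Machine) (x : Loc) (v : Val) :
      CXLStep owner vol z γ (.LStore i x v)
        ⟨fun j y => if y = x then (if j = i then some v else none) else γ.cache j y,
         γ.mem⟩
  | rstore (γ : CXLConfig Machine Loc Val) (i : Machine) (x : Loc) (v : Val) :
      CXLStep owner vol z γ (.RStore i x v)
        ⟨fun j y => if y = x then (if j = owner x then some v else none) else γ.cache j y,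
         γ.mem⟩
  | mstore (γ : CXLConfig Machine Loc Val) (i : Machine) (x : Loc) (v : Val) :
      CXLStep owner vol z γ (.MStore i x v)
        ⟨fun j y => if y = x then none else γ.cache j y,
         fun j y => if j = owner x ∧ y = x then v else γ.mem j y⟩
  | load_cache (γ : CXLConfig Machine Loc Val) (i j : Machine) (x : Loc) (v : Val)
      (h : γ.cache j x = some v) :
      CXLStep owner vol z γ (.Load i x v)
        ⟨fun j' y => if j' = i ∧ y = x then some v else γ.cache j' y, γ.mem⟩
  | load_mem (γ : CXLConfig Machine Loc Val) (i : Machine) (x : Loc) (v : Val)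
      (h : ∀ j, γ.cache j x = none) (hm : γ.mem (owner x) x = v) :
      CXLStep owner vol z γ (.Load i x v) γ
  | lflush (γ : CXLConfig Machine Loc Val) (i : Machine) (x : Loc)
      (h : γ.cache i x = none) :
      CXLStep owner vol z γ (.LFlush i x) γ
  | rflush (γ : CXLConfig Machine Loc Val) (i : Machine) (x : Loc)
      (h : ∀ j, γ.cache j x = none) :
      CXLStep owner vol z γ (.RFlush i x) γ
  | gpf (γ : CXLConfig Machine Loc Val) (i : Machine)
      (h : ∀ j y, γ.cache j y = none) :
      CXLStep owner vol z γ (.GPF i) γ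
  | prop_cache_cache (γ : CXLConfig Machine Loc Val) (i : Machine) (x : Loc) (v : Val)
      (hik : i ≠ owner x) (h : γ.cache i x = some v) :
      CXLStep owner vol z γ .tau
        ⟨fun j y => if y = x then
            (if j = owner x then some v else if j = i then none else γ.cache j y)
          else γ.cache j y,
         γ.mem⟩
  | prop_cache_mem (γ : CXLConfig Machine Loc Val) (x : Loc) (v : Val)
      (h : γ.cache (owner x) x = some v) :
      CXLStep owner vol z γ .tau
        ⟨fun j y => if y = x then none else γ.cache j y,
         fun j y => if j = owner x ∧ y = x then v else γ.mem j y⟩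
  | crash (γ : CXLConfig Machine Loc Val) (i : Machine) :
      CXLStep owner vol z γ (.Crash i)
        ⟨fun j y => if j = i then none else γ.cache j y,
         fun j y => if j = i ∧ vol i then z else γ.mem j y⟩

/-- `CXLTrace owner vol z γ ls γ'` : `γ'` is reachable from `γ` by a sequence of
transitions labeled by the elements of `ls`, in this order, possibly interleaved
with additional silent `τ`-steps (this is the `γ ⇒^{α_1⋯α_n} γ'` relation). -/
inductive CXLTrace (owner : Loc → Machine) (vol : Machine → Bool) (z : Val) :
    CXLConfig Machine Loc Val → List (CXLLabel Machine Loc Val) →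
      CXLConfig Machine Loc Val → Prop where
  | nil (γ : CXLConfig Machine Loc Val) : CXLTrace owner vol z γ [] γ
  | tau {γ γ' γ'' : CXLConfig Machine Loc Val} {ls : List (CXLLabel Machine Loc Val)}
      (h : CXLStep owner vol z γ .tau γ') (ht : CXLTrace owner vol z γ' ls γ'') :
      CXLTrace owner vol z γ ls γ''
  | cons {γ γ' γ'' : CXLConfig Machine Loc Val} {l : CXLLabel Machine Loc Val}
      {ls : List (CXLLabel Machine Loc Val)}
      (h : CXLStep owner vol z γ l γ') (ht : CXLTrace owner vol z γ' ls γ'') :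
      CXLTrace owner vol z γ (l :: ls) γ''

/-- Reachability by a (possibly empty) finite sequence of silent `τ`-steps. -/
def CXLTauSteps (owner : Loc → Machine) (vol : Machine → Bool) (z : Val) :
    CXLConfig Machine Loc Val → CXLConfig Machine Loc Val → Prop :=
  Relation.ReflTransGen (fun a b => CXLStep owner vol z a .tau b)

/-- The initial configuration `γ_0`: all caches empty, all memories `0`. -/
def CXLInit (Machine Loc : Type) (z : Val) : CXLConfig Machine Loc Val :=
  ⟨fun _ _ => none, fun _ _ => z⟩

/-- Simulation invariant relating a configuration on the `LStore` path to
one on the `MStore` path. -/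
def CXLRel (owner : Loc → Machine) (x : Loc) (v : Val)
    (γ δ : CXLConfig Machine Loc Val) : Prop :=
  (∀ j y, y ≠ x → γ.cache j y = δ.cache j y) ∧
  (∀ j, δ.cache j x = none) ∧
  (∀ j y, ¬(j = owner x ∧ y = x) → γ.mem j y = δ.mem j y) ∧
  δ.mem (owner x) x = v ∧
  ((∃ m, γ.cache m x = some v ∧ ∀ j, j ≠ m → γ.cache j x = none) ∨
   ((∀ j, γ.cache j x = none) ∧ γ.mem (owner x) x = v))

lemma CXLRel.sim (owner : Loc → Machine) (vol : Machine → Bool) (z : Val)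
    (x : Loc) (v : Val) {γ γ' δ : CXLConfig Machine Loc Val}
    (hR : CXLRel owner x v γ δ) (h : CXLStep owner vol z γ .tau γ') :
    ∃ δ', CXLTauSteps owner vol z δ δ' ∧ CXLRel owner x v γ' δ' := by
  obtain ⟨hc, hdc, hm, hdm, hphase⟩ := hR
  cases h with
  | prop_cache_cache m y w hik hcy =>
    by_cases hyx : y = x
    · subst hyx
      rcases hphase with ⟨m', hm', hothers⟩ | ⟨hall, _⟩
      · have hmm : m = m' := by
          by_contra hne
          rw [hothers m hne] at hcy
          exact nomatch hcy
        subst hmm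
        have hwv : w = v := by
          rw [hm'] at hcy
          exact (Option.some.injEq _ _ ▸ hcy).symm
        subst hwv
        refine ⟨δ, Relation.ReflTransGen.refl, ?_, hdc, hm, hdm, ?_⟩
        · intro j y' hy'
          simpa [hy'] using hc j y' hy'
        · left
          refine ⟨owner y, by simp, fun j hj => ?_⟩
          by_cases hjm : j = m
          · simp [hjm, hj, hik]
          · simp [hjm, hj, hothers j hjm]
      · rw [hall m] at hcy; exact nomatch hcy
    · have hδ : δ.cache m y = some w := (hc m y hyx) ▸ hcy
      have hne : ¬ ((x : Loc) = y) := fun h => hyx h.symm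
      refine ⟨_, Relation.ReflTransGen.single
        (CXLStep.prop_cache_cache δ m y w hik hδ), ?_, ?_, hm, hdm, ?_⟩
      · intro j y' hy'
        by_cases hyy : y' = y
        · subst hyy
          simpa using by rw [hc j y' hy']
        · simpa [hyy] using hc j y' hy'
      · intro j
        simpa [hne] using hdc j
      · rcases hphase with ⟨m', hm', hothers⟩ | ⟨hall, hmem⟩
        · left
          exact ⟨m', by simpa [hne] using hm',
            fun j hj => by simpa [hne] using hothers j hj⟩
        · right
          exact ⟨fun j => by simpa [hne] using hall j, hmem⟩
  | prop_cache_mem y w hcy =>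
    by_cases hyx : y = x
    · subst hyx
      rcases hphase with ⟨m', hm', hothers⟩ | ⟨hall, _⟩
      · have hmm : owner y = m' := by
          by_contra hne
          rw [hothers _ hne] at hcy
          exact nomatch hcy
        have hwv : w = v := by
          rw [← hmm, hcy] at hm'
          exact Option.some.injEq _ _ ▸ hm'
        subst hwv
        refine ⟨δ, Relation.ReflTransGen.refl, ?_, hdc, ?_, hdm, ?_⟩
        · intro j y' hy'
          simpa [hy'] using hc j y' hy'
        · intro j y' hjy
          simpa [hjy] using hm j y' hjy
        · right
          exact ⟨fun j => by simp, by simp⟩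
      · rw [hall _] at hcy; exact nomatch hcy
    · have hδ : δ.cache (owner y) y = some w := (hc _ y hyx) ▸ hcy
      have hne : ¬ ((x : Loc) = y) := fun h => hyx h.symm
      refine ⟨_, Relation.ReflTransGen.single
        (CXLStep.prop_cache_mem δ y w hδ), ?_, ?_, ?_, ?_, ?_⟩
      · intro j y' hy'
        by_cases hyy : y' = y
        · simp [hyy]
        · simpa [hyy] using hc j y' hy'
      · intro j
        simpa [hne] using hdc j
      · intro j y' hjy
        by_cases hjy' : j = owner y ∧ y' = y
        · simp [hjy'.1, hjy'.2]
        · simp only [if_neg hjy']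
          simpa [hjy'] using hm j y' hjy
      · simpa [hne] using hdm
      · rcases hphase with ⟨m', hm', hothers⟩ | ⟨hall, hmem⟩
        · left
          exact ⟨m', by simpa [hne] using hm',
            fun j hj => by simpa [hne] using hothers j hj⟩
        · right
          exact ⟨fun j => by simpa [hne] using hall j, by simpa [hne] using hmem⟩

lemma CXLRel.simMany (owner : Loc → Machine) (vol : Machine → Bool) (z : Val)
    (x : Loc) (v : Val) {γ γ₃ : CXLConfig Machine Loc Val}
    (h : CXLTauSteps owner vol z γ γ₃) :
    ∀ δ, CXLRel owner x v γ δ →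
      ∃ δ', CXLTauSteps owner vol z δ δ' ∧ CXLRel owner x v γ₃ δ' := by
  induction h using Relation.ReflTransGen.head_induction_on with
  | refl => exact fun δ h => ⟨δ, Relation.ReflTransGen.refl, h⟩
  | head hstep _ ih =>
    intro δ hR
    obtain ⟨δ', hs, hR'⟩ := CXLRel.sim owner vol z x v hR hstep
    obtain ⟨δ'', hs', hR''⟩ := ih δ' hR'
    exact ⟨δ'', hs.trans hs', hR''⟩

lemma CXLTauSteps.toTrace (owner : Loc → Machine) (vol : Machine → Bool) (z : Val)
    {γ γ' : CXLConfig Machine Loc Val} (h : CXLTauSteps owner vol z γ γ') :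
    CXLTrace owner vol z γ [] γ' := by
  induction h using Relation.ReflTransGen.head_induction_on with
  | refl => exact .nil _
  | head hstep _ ih => exact .tau hstep ih

/-- Key claim in the proof of Proposition 1(8): an `LStore`, followed by
internal propagation steps and an `RFlush`, is simulated by an `MStore`
(up to `τ`-steps). -/
theorem lstore_taus_rflush_simulated_by_mstore
    (owner : Loc → Machine) (vol : Machine → Bool) (z : Val)
    (i : Machine) (x : Loc) (v : Val)
    (γ₁ γ₂ γ₃ γ₄ : CXLConfig Machine Loc Val)
    (h1 : CXLStep owner vol z γ₁ (.LStore i x v) γ₂)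
    (h2 : CXLTauSteps owner vol z γ₂ γ₃)
    (h3 : CXLStep owner vol z γ₃ (.RFlush i x) γ₄) :
    CXLTrace owner vol z γ₁ [.MStore i x v] γ₄ := by
  cases h1 with
  | lstore _ _ _ =>
  cases h3 with
  | rflush _ _ hall =>
  set δ : CXLConfig Machine Loc Val :=
    ⟨fun j y => if y = x then none else γ₁.cache j y,
     fun j y => if j = owner x ∧ y = x then v else γ₁.mem j y⟩ with hδ
  have hR2 : CXLRel owner x v
      ⟨fun j y => if y = x then (if j = i then some v else none) else γ₁.cache j y,
       γ₁.mem⟩ δ := by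
    refine ⟨?_, ?_, ?_, ?_, ?_⟩
    · intro j y hy; simp [hδ, hy]
    · intro j; simp [hδ]
    · intro j y hjy; simp [hδ, hjy]
    · simp [hδ]
    · left; exact ⟨i, by simp, fun j hj => by simp [hj]⟩
  obtain ⟨δ', hs, hR3⟩ := CXLRel.simMany owner vol z x v h2 δ hR2
  obtain ⟨hc, hdc, hm, hdm, hphase⟩ := hR3
  have heq : γ₃ = δ' := by
    rcases hphase with ⟨m', hm', _⟩ | ⟨_, hmem⟩
    · rw [hall m'] at hm'; exact nomatch hm'
    · cases γ₃ with
      | mk c3 m3 =>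
      cases δ' with
      | mk cd md =>
      simp only [CXLConfig.mk.injEq]
      constructor
      · funext j y
        by_cases hy : y = x
        · subst hy; exact (hall j).trans (hdc j).symm
        · exact hc j y hy
      · funext j y
        by_cases hjy : j = owner x ∧ y = x
        · obtain ⟨h1', h2'⟩ := hjy; subst h1'; subst h2'
          exact hmem.trans hdm.symm
        · exact hm j y hjy
  exact .cons (CXLStep.mstore γ₁ i x v) (heq ▸ CXLTauSteps.toTrace owner vol z hs)
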